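/- Let M be an n×n dissimilarity matrix and suppose some (n−m)×(n−m) principal submatrix of M has tree rank r. Then M has tree rank at most r + m. -/

import Mathlib

/-- Off-diagonal entrywise (tropical) minimum decomposition of a dissimilarity matrix. -/
def DissMinDecomp {n r : ℕ} (M : Fin n → Fin n → ℝ) (N : Fin r → Fin n → Fin n → ℝ) : Prop :=
  ∀ i j : Fin n, i ≠ j → (∀ k, M i j ≤ N k i j) ∧ (∃ k, M i j = N k i j)

/-- A tree matrix: a symmetric dissimilarity matrix satisfying the four-point
condition (the minimum of the three Plücker pairwise sums is attained at least
twice for every quadruple of distinct indices). -/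
def TreeMatrix {n : ℕ} (D : Fin n → Fin n → ℝ) : Prop :=
  (∀ i j, D i j = D j i) ∧
  ∀ i j k l : Fin n, i ≠ j → i ≠ k → i ≠ l → j ≠ k → j ≠ l → k ≠ l →
    (D i j + D k l = D i k + D j l ∧ D i j + D k l ≤ D i l + D j k) ∨
    (D i j + D k l = D i l + D j k ∧ D i j + D k l ≤ D i k + D j l) ∨
    (D i k + D j l = D i l + D j k ∧ D i k + D j l ≤ D i j + D k l)

/-- The dissimilarity matrix `M` has tree rank at most `r`. -/
def TreeRankLe {n : ℕ} (r : ℕ) (M : Fin n → Fin n → ℝ) : Prop :=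
  ∃ T : Fin r → Fin n → Fin n → ℝ, (∀ k, TreeMatrix (T k)) ∧ DissMinDecomp M (fun k => T k)

/-- star matrix from a potential vector -/
lemma star_tree {N : ℕ} (v : Fin N → ℝ) : TreeMatrix (fun x y => v x + v y) :=
  ⟨fun _ _ => by ring, fun i j k l _ _ _ _ _ _ => Or.inl ⟨by ring, le_of_eq (by ring)⟩⟩

lemma const_tree {N : ℕ} (c : ℝ) : TreeMatrix (fun _ _ : Fin N => c) :=
  ⟨fun _ _ => rfl, fun i j k l _ _ _ _ _ _ => Or.inl ⟨by ring, le_of_eq (by ring)⟩⟩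

def starMat {N : ℕ} (M : Fin N → Fin N → ℝ) (C : ℝ) (c : Fin N) : Fin N → Fin N → ℝ :=
  fun x y => (if x = c then -C else M c x + C) + (if y = c then -C else M c y + C)

lemma starMat_tree {N : ℕ} (M : Fin N → Fin N → ℝ) (C : ℝ) (c : Fin N) :
    TreeMatrix (starMat M C c) :=
  star_tree (fun z => if z = c then -C else M c z + C)

lemma starMat_ge {N : ℕ} (M : Fin N → Fin N → ℝ) (hsym : ∀ i j, M i j = M j i)
    (C A : ℝ) (hA : ∀ a b, |M a b| ≤ A) (hC : 2 * A ≤ C)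
    (c x y : Fin N) (hxy : x ≠ y) : M x y ≤ starMat M C c x y := by
  unfold starMat
  by_cases hxc : x = c
  · have hyc : ¬ y = c := fun h => hxy (hxc.trans h.symm)
    rw [if_pos hxc, if_neg hyc, hxc]
    linarith
  · by_cases hyc : y = c
    · rw [if_neg hxc, if_pos hyc, hyc, hsym x c]
      linarith
    · rw [if_neg hxc, if_neg hyc]
      have h1 := abs_le.mp (hA c x)
      have h2 := abs_le.mp (hA c y)
      have h3 := abs_le.mp (hA x y)
      linarith

lemma starMat_left {N : ℕ} (M : Fin N → Fin N → ℝ) (C : ℝ) (c y : Fin N) (hyc : y ≠ c) :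
    starMat M C c c y = M c y := by
  unfold starMat; rw [if_pos rfl, if_neg hyc]; ring

lemma starMat_right {N : ℕ} (M : Fin N → Fin N → ℝ) (hsym : ∀ i j, M i j = M j i)
    (C : ℝ) (c x : Fin N) (hxc : x ≠ c) : starMat M C c x c = M x c := by
  unfold starMat; rw [if_neg hxc, if_pos rfl, hsym x c]; ring

def extMat {q N : ℕ} (t : Fin q → Fin q → ℝ) (K : ℝ) (g : Fin N → Fin q) (w : Fin N → ℝ) :
    Fin N → Fin N → ℝ :=
  fun x y => (if g x = g y then K else t (g x) (g y)) + (w x + w y)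

lemma ext_tree {q N : ℕ} (t : Fin q → Fin q → ℝ) (ht : TreeMatrix t) (c0 : Fin q) (K : ℝ)
    (hK : ∀ d e : Fin q, d ≠ c0 → e ≠ c0 → d ≠ e → t c0 d + t c0 e ≤ K + t d e)
    (g : Fin N → Fin q) (hg : ∀ x y, x ≠ y → g x = g y → g x = c0)
    (w : Fin N → ℝ) : TreeMatrix (extMat t K g w) := by
  obtain ⟨ts, hfp⟩ := ht
  unfold extMat
  constructor
  · intro x y
    dsimp only
    by_cases h : g x = g y
    · rw [if_pos h, if_pos h.symm]; ring
    · rw [if_neg h, if_neg (fun hh => h hh.symm), ts]; ring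
  · intro i j k l hij hik hil hjk hjl hkl
    dsimp only
    have hne : ∀ x y : Fin N, x ≠ y → g x ≠ c0 → g x ≠ g y :=
      fun x y hxy hxc h => hxc (hg x y hxy h)
    by_cases hi : g i = c0 <;> by_cases hj : g j = c0 <;>
      by_cases hk : g k = c0 <;> by_cases hl : g l = c0
    · -- TTTT
      rw [if_pos (hi.trans hj.symm), if_pos (hk.trans hl.symm), if_pos (hi.trans hk.symm),
        if_pos (hj.trans hl.symm), if_pos (hi.trans hl.symm), if_pos (hj.trans hk.symm)]
      exact Or.inl ⟨by ring, le_of_eq (by ring)⟩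
    · -- TTTF : i j k = c0
      have dil : g i ≠ g l := fun h => hl (h.symm.trans hi)
      have djl : g j ≠ g l := fun h => hl (h.symm.trans hj)
      have dkl : g k ≠ g l := fun h => hl (h.symm.trans hk)
      rw [if_pos (hi.trans hj.symm), if_neg dkl, if_pos (hi.trans hk.symm), if_neg djl,
        if_neg dil, if_pos (hj.trans hk.symm)]
      rw [hi, hj, hk]
      exact Or.inl ⟨by ring, le_of_eq (by ring)⟩
    · -- TTFT : i j l = c0
      have dik : g i ≠ g k := fun h => hk (h.symm.trans hi)
      have djk : g j ≠ g k := fun h => hk (h.symm.trans hj)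
      have dkl : g k ≠ g l := fun h => hk (h.trans hl)
      rw [if_pos (hi.trans hj.symm), if_neg dkl, if_neg dik, if_pos (hj.trans hl.symm),
        if_pos (hi.trans hl.symm), if_neg djk]
      rw [hi, hj, hl]
      exact Or.inl ⟨by linarith [ts c0 (g k)], by linarith [ts c0 (g k)]⟩
    · -- TTFF : i j = c0
      have dik : g i ≠ g k := fun h => hk (h.symm.trans hi)
      have dil : g i ≠ g l := fun h => hl (h.symm.trans hi)
      have djk : g j ≠ g k := fun h => hk (h.symm.trans hj)
      have djl : g j ≠ g l := fun h => hl (h.symm.trans hj)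
      have dkl : g k ≠ g l := hne k l hkl hk
      rw [if_pos (hi.trans hj.symm), if_neg dkl, if_neg dik, if_neg djl, if_neg dil, if_neg djk]
      rw [hi, hj]
      exact Or.inr (Or.inr ⟨by ring, by linarith [hK (g k) (g l) hk hl dkl]⟩)
    · -- TFTT : i k l = c0
      have dij : g i ≠ g j := fun h => hj (h.symm.trans hi)
      have djk : g j ≠ g k := fun h => hj (h.trans hk)
      have djl : g j ≠ g l := fun h => hj (h.trans hl)
      rw [if_neg dij, if_pos (hk.trans hl.symm), if_pos (hi.trans hk.symm), if_neg djl,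
        if_pos (hi.trans hl.symm), if_neg djk]
      rw [hi, hk, hl]
      exact Or.inl ⟨by linarith [ts c0 (g j)], by linarith [ts c0 (g j)]⟩
    · -- TFTF : i k = c0
      have dij : g i ≠ g j := fun h => hj (h.symm.trans hi)
      have dil : g i ≠ g l := fun h => hl (h.symm.trans hi)
      have djk : g j ≠ g k := fun h => hj (h.trans hk)
      have dkl : g k ≠ g l := fun h => hl (h.symm.trans hk)
      have djl : g j ≠ g l := hne j l hjl hj
      rw [if_neg dij, if_neg dkl, if_pos (hi.trans hk.symm), if_neg djl, if_neg dil, if_neg djk]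
      rw [hi, hk]
      exact Or.inr (Or.inl ⟨by linarith [ts c0 (g j)],
        by linarith [hK (g j) (g l) hj hl djl, ts c0 (g j)]⟩)
    · -- TFFT : i l = c0
      have dij : g i ≠ g j := fun h => hj (h.symm.trans hi)
      have dik : g i ≠ g k := fun h => hk (h.symm.trans hi)
      have djl : g j ≠ g l := fun h => hj (h.trans hl)
      have dkl : g k ≠ g l := fun h => hk (h.trans hl)
      have djk : g j ≠ g k := hne j k hjk hj
      rw [if_neg dij, if_neg dkl, if_neg dik, if_neg djl, if_pos (hi.trans hl.symm), if_neg djk]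
      rw [hi, hl]
      exact Or.inl ⟨by linarith [ts c0 (g j), ts c0 (g k)],
        by linarith [hK (g j) (g k) hj hk djk, ts c0 (g j), ts c0 (g k)]⟩
    · -- TFFF : i = c0
      have dij : g i ≠ g j := fun h => hj (h.symm.trans hi)
      have dik : g i ≠ g k := fun h => hk (h.symm.trans hi)
      have dil : g i ≠ g l := fun h => hl (h.symm.trans hi)
      have djk : g j ≠ g k := hne j k hjk hj
      have djl : g j ≠ g l := hne j l hjl hj
      have dkl : g k ≠ g l := hne k l hkl hk
      rw [if_neg dij, if_neg dkl, if_neg dik, if_neg djl, if_neg dil, if_neg djk]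
      rcases hfp (g i) (g j) (g k) (g l) dij dik dil djk djl dkl with
        ⟨h1, h2⟩ | ⟨h1, h2⟩ | ⟨h1, h2⟩
      · exact Or.inl ⟨by linarith, by linarith⟩
      · exact Or.inr (Or.inl ⟨by linarith, by linarith⟩)
      · exact Or.inr (Or.inr ⟨by linarith, by linarith⟩)
    · -- FTTT : j k l = c0
      have dij : g i ≠ g j := fun h => hi (h.trans hj)
      have dik : g i ≠ g k := fun h => hi (h.trans hk)
      have dil : g i ≠ g l := fun h => hi (h.trans hl)
      rw [if_neg dij, if_pos (hk.trans hl.symm), if_neg dik, if_pos (hj.trans hl.symm),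
        if_neg dil, if_pos (hj.trans hk.symm)]
      rw [hj, hk, hl]
      exact Or.inl ⟨by ring, le_of_eq (by ring)⟩
    · -- FTTF : j k = c0
      have dij : g i ≠ g j := fun h => hi (h.trans hj)
      have dik : g i ≠ g k := fun h => hi (h.trans hk)
      have dkl : g k ≠ g l := fun h => hl (h.symm.trans hk)
      have djl : g j ≠ g l := fun h => hl (h.symm.trans hj)
      have dil : g i ≠ g l := hne i l hil hi
      rw [if_neg dij, if_neg dkl, if_neg dik, if_neg djl, if_neg dil, if_pos (hj.trans hk.symm)]
      rw [hj, hk]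
      exact Or.inl ⟨by ring, by linarith [hK (g i) (g l) hi hl dil, ts (g i) c0]⟩
    · -- FTFT : j l = c0
      have dij : g i ≠ g j := fun h => hi (h.trans hj)
      have djk : g j ≠ g k := fun h => hk (h.symm.trans hj)
      have dil : g i ≠ g l := fun h => hi (h.trans hl)
      have dkl : g k ≠ g l := fun h => hk (h.trans hl)
      have dik : g i ≠ g k := hne i k hik hi
      rw [if_neg dij, if_neg dkl, if_neg dik, if_pos (hj.trans hl.symm), if_neg dil, if_neg djk]
      rw [hj, hl]
      exact Or.inr (Or.inl ⟨by linarith [ts (g k) c0],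
        by linarith [hK (g i) (g k) hi hk dik, ts (g i) c0, ts (g k) c0]⟩)
    · -- FTFF : j = c0
      have dij : g i ≠ g j := fun h => hi (h.trans hj)
      have djk : g j ≠ g k := fun h => hk (h.symm.trans hj)
      have djl : g j ≠ g l := fun h => hl (h.symm.trans hj)
      have dik : g i ≠ g k := hne i k hik hi
      have dil : g i ≠ g l := hne i l hil hi
      have dkl : g k ≠ g l := hne k l hkl hk
      rw [if_neg dij, if_neg dkl, if_neg dik, if_neg djl, if_neg dil, if_neg djk]
      rcases hfp (g i) (g j) (g k) (g l) dij dik dil djk djl dkl with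
        ⟨h1, h2⟩ | ⟨h1, h2⟩ | ⟨h1, h2⟩
      · exact Or.inl ⟨by linarith, by linarith⟩
      · exact Or.inr (Or.inl ⟨by linarith, by linarith⟩)
      · exact Or.inr (Or.inr ⟨by linarith, by linarith⟩)
    · -- FFTT : k l = c0
      have dik : g i ≠ g k := fun h => hi (h.trans hk)
      have dil : g i ≠ g l := fun h => hi (h.trans hl)
      have djk : g j ≠ g k := fun h => hj (h.trans hk)
      have djl : g j ≠ g l := fun h => hj (h.trans hl)
      have dij : g i ≠ g j := hne i j hij hi
      rw [if_neg dij, if_pos (hk.trans hl.symm), if_neg dik, if_neg djl, if_neg dil, if_neg djk]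
      rw [hk, hl]
      exact Or.inr (Or.inr ⟨by ring,
        by linarith [hK (g i) (g j) hi hj dij, ts (g i) c0, ts (g j) c0]⟩)
    · -- FFTF : k = c0
      have dik : g i ≠ g k := fun h => hi (h.trans hk)
      have djk : g j ≠ g k := fun h => hj (h.trans hk)
      have dkl : g k ≠ g l := fun h => hl (h.symm.trans hk)
      have dij : g i ≠ g j := hne i j hij hi
      have dil : g i ≠ g l := hne i l hil hi
      have djl : g j ≠ g l := hne j l hjl hj
      rw [if_neg dij, if_neg dkl, if_neg dik, if_neg djl, if_neg dil, if_neg djk]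
      rcases hfp (g i) (g j) (g k) (g l) dij dik dil djk djl dkl with
        ⟨h1, h2⟩ | ⟨h1, h2⟩ | ⟨h1, h2⟩
      · exact Or.inl ⟨by linarith, by linarith⟩
      · exact Or.inr (Or.inl ⟨by linarith, by linarith⟩)
      · exact Or.inr (Or.inr ⟨by linarith, by linarith⟩)
    · -- FFFT : l = c0
      have dil : g i ≠ g l := fun h => hi (h.trans hl)
      have djl : g j ≠ g l := fun h => hj (h.trans hl)
      have dkl : g k ≠ g l := fun h => hk (h.trans hl)
      have dij : g i ≠ g j := hne i j hij hi
      have dik : g i ≠ g k := hne i k hik hi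
      have djk : g j ≠ g k := hne j k hjk hj
      rw [if_neg dij, if_neg dkl, if_neg dik, if_neg djl, if_neg dil, if_neg djk]
      rcases hfp (g i) (g j) (g k) (g l) dij dik dil djk djl dkl with
        ⟨h1, h2⟩ | ⟨h1, h2⟩ | ⟨h1, h2⟩
      · exact Or.inl ⟨by linarith, by linarith⟩
      · exact Or.inr (Or.inl ⟨by linarith, by linarith⟩)
      · exact Or.inr (Or.inr ⟨by linarith, by linarith⟩)
    · -- FFFF
      have dij : g i ≠ g j := hne i j hij hi
      have dik : g i ≠ g k := hne i k hik hi
      have dil : g i ≠ g l := hne i l hil hi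
      have djk : g j ≠ g k := hne j k hjk hj
      have djl : g j ≠ g l := hne j l hjl hj
      have dkl : g k ≠ g l := hne k l hkl hk
      rw [if_neg dij, if_neg dkl, if_neg dik, if_neg djl, if_neg dil, if_neg djk]
      rcases hfp (g i) (g j) (g k) (g l) dij dik dil djk djl dkl with
        ⟨h1, h2⟩ | ⟨h1, h2⟩ | ⟨h1, h2⟩
      · exact Or.inl ⟨by linarith, by linarith⟩
      · exact Or.inr (Or.inl ⟨by linarith, by linarith⟩)
      · exact Or.inr (Or.inr ⟨by linarith, by linarith⟩)

theorem stmt16 (n m r : ℕ) (hmn : m ≤ n) (M : Fin n → Fin n → ℝ)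
    (hsym : ∀ i j, M i j = M j i)
    (e : Fin (n - m) → Fin n) (he : Function.Injective e)
    (hsub : TreeRankLe r (fun a b => M (e a) (e b))) :
    TreeRankLe (r + m) M := by
  classical
  obtain ⟨T, hT, hdec⟩ := hsub
  obtain ⟨A, hA⟩ := Finite.exists_le (fun p : Fin n × Fin n => |M p.1 p.2|)
  obtain ⟨A', hA'⟩ := Finite.exists_le
    (fun p : Fin r × Fin (n - m) × Fin (n - m) => |T p.1 p.2.1 p.2.2|)
  set A₀ := max A 0 with hA₀def
  have hA0 : (0 : ℝ) ≤ A₀ := le_max_right _ _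
  have hAb : ∀ x y, |M x y| ≤ A₀ := fun x y => (hA (x, y)).trans (le_max_left _ _)
  set A₁ := max A' 0 with hA₁def
  have hA1 : (0 : ℝ) ≤ A₁ := le_max_right _ _
  have hA'b : ∀ k a b, |T k a b| ≤ A₁ := fun k a b => (hA' (k, a, b)).trans (le_max_left _ _)
  -- the complement enumeration
  have hecard : (Finset.univ.image e).card = n - m := by
    rw [Finset.card_image_of_injective _ he, Finset.card_univ, Fintype.card_fin]
  set S : Finset (Fin n) := Finset.univ \ Finset.univ.image e with hSdef
  have hScard : S.card = m := by
    rw [hSdef, Finset.card_sdiff_of_subset (Finset.subset_univ _), Finset.card_univ, Fintype.card_fin,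
      hecard, Nat.sub_sub_self hmn]
  set σ : Fin m → Fin n := fun j => (S.equivFin.symm (Fin.cast hScard.symm j) : Fin n)
    with hσdef
  have hσ : ∀ x : Fin n, (¬ ∃ a, e a = x) → ∃ j, σ j = x := by
    intro x hx
    have hxS : x ∈ S := by
      rw [hSdef, Finset.mem_sdiff]
      refine ⟨Finset.mem_univ _, fun hmem => hx ?_⟩
      obtain ⟨a, _, ha⟩ := Finset.mem_image.mp hmem
      exact ⟨a, ha⟩
    refine ⟨Fin.cast hScard (S.equivFin ⟨x, hxS⟩), ?_⟩
    simp [hσdef]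
  -- star matrices cover all rows outside the range of e
  have hstar_ge : ∀ (c x y : Fin n), x ≠ y → M x y ≤ starMat M (2 * A₀) c x y :=
    starMat_ge M hsym (2 * A₀) A₀ hAb le_rfl
  by_cases hq : n - m = 0
  · -- degenerate case : no index is in the range of e
    have hnone : ∀ x : Fin n, ¬ ∃ a, e a = x := by
      rintro x ⟨a, -⟩
      have := a.isLt
      omega
    refine ⟨Fin.append (fun _ => fun _ _ => A₀) (fun j => starMat M (2 * A₀) (σ j)), ?_, ?_⟩
    · intro k
      refine Fin.addCases ?_ ?_ k
      · intro k'; simp only [Fin.append_left]; exact const_tree A₀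
      · intro j; simp only [Fin.append_right]; exact starMat_tree M (2 * A₀) (σ j)
    · intro x y hxy
      constructor
      · intro k
        refine Fin.addCases ?_ ?_ k
        · intro k'; simp only [Fin.append_left]
          have := abs_le.mp (hAb x y); linarith
        · intro j; simp only [Fin.append_right]
          exact hstar_ge (σ j) x y hxy
      · obtain ⟨j, hj⟩ := hσ x (hnone x)
        refine ⟨Fin.natAdd r j, ?_⟩
        simp only [Fin.append_right]
        rw [hj, starMat_left M (2 * A₀) x y (fun h => hxy h.symm)]
  · -- main case
    haveI : NeZero (n - m) := ⟨hq⟩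
    set K := 3 * A₁ with hKdef
    set L := A₀ + A₁ with hLdef
    set g : Fin n → Fin (n - m) := fun x => if h : ∃ a, e a = x then h.choose else 0 with hgdef
    have hg_mem : ∀ (x : Fin n) (h : ∃ a, e a = x), e (g x) = x := by
      intro x h
      simp only [hgdef, dif_pos h]
      exact h.choose_spec
    have hg_nmem : ∀ (x : Fin n), (¬ ∃ a, e a = x) → g x = 0 := by
      intro x h
      simp only [hgdef, dif_neg h]
    have hg_col : ∀ x y : Fin n, x ≠ y → g x = g y → g x = 0 := by
      intro x y hxy hgeq
      by_cases hx : ∃ a, e a = x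
      · by_cases hy : ∃ a, e a = y
        · exact absurd ((hg_mem x hx).symm.trans (hgeq ▸ hg_mem y hy)) hxy
        · rw [hgeq]; exact hg_nmem y hy
      · exact hg_nmem x hx
    set w : Fin n → ℝ := fun x => if ∃ a, e a = x then 0 else L with hwdef
    refine ⟨Fin.append (fun k => extMat (T k) K g w)
      (fun j => starMat M (2 * A₀) (σ j)), ?_, ?_⟩
    · intro k
      refine Fin.addCases ?_ ?_ k
      · intro k'; simp only [Fin.append_left]
        refine ext_tree (T k') (hT k') 0 K ?_ g hg_col w
        intro d e' hd he' hde
        have h1 := abs_le.mp (hA'b k' 0 d)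
        have h2 := abs_le.mp (hA'b k' 0 e')
        have h3 := abs_le.mp (hA'b k' d e')
        rw [hKdef]; linarith
      · intro j; simp only [Fin.append_right]; exact starMat_tree M (2 * A₀) (σ j)
    · intro x y hxy
      constructor
      · intro k
        refine Fin.addCases ?_ ?_ k
        · intro k'; simp only [Fin.append_left]
          unfold extMat
          have hM := abs_le.mp (hAb x y)
          by_cases hx : ∃ a, e a = x
          · by_cases hy : ∃ a, e a = y
            · have hgg : g x ≠ g y :=
                fun h => hxy ((hg_mem x hx).symm.trans (h ▸ hg_mem y hy))
              have hineq := (hdec (g x) (g y) hgg).1 k'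
              dsimp only at hineq
              rw [hg_mem x hx, hg_mem y hy] at hineq
              rw [if_neg hgg]
              simp only [hwdef, if_pos hx, if_pos hy]
              linarith
            · simp only [hwdef, if_pos hx, if_neg hy]
              by_cases hgg : g x = g y
              · rw [if_pos hgg, hKdef, hLdef]; linarith
              · rw [if_neg hgg, hLdef]
                have h2 := abs_le.mp (hA'b k' (g x) (g y))
                linarith
          · by_cases hy : ∃ a, e a = y
            · simp only [hwdef, if_neg hx, if_pos hy]
              by_cases hgg : g x = g y
              · rw [if_pos hgg, hKdef, hLdef]; linarith
              · rw [if_neg hgg, hLdef]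
                have h2 := abs_le.mp (hA'b k' (g x) (g y))
                linarith
            · have hgg : g x = g y := (hg_nmem x hx).trans (hg_nmem y hy).symm
              rw [if_pos hgg]
              simp only [hwdef, if_neg hx, if_neg hy]
              rw [hKdef, hLdef]; linarith
        · intro j; simp only [Fin.append_right]
          exact hstar_ge (σ j) x y hxy
      · by_cases hx : ∃ a, e a = x
        · by_cases hy : ∃ a, e a = y
          · have hgg : g x ≠ g y :=
              fun h => hxy ((hg_mem x hx).symm.trans (h ▸ hg_mem y hy))
            obtain ⟨k', hk'⟩ := (hdec (g x) (g y) hgg).2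
            refine ⟨Fin.castAdd m k', ?_⟩
            simp only [Fin.append_left]
            unfold extMat
            rw [if_neg hgg]
            simp only [hwdef, if_pos hx, if_pos hy]
            dsimp only at hk'
            rw [hg_mem x hx, hg_mem y hy] at hk'
            linarith [hk']
          · obtain ⟨j, hj⟩ := hσ y hy
            refine ⟨Fin.natAdd r j, ?_⟩
            simp only [Fin.append_right]
            rw [hj, starMat_right M hsym (2 * A₀) y x hxy]
        · obtain ⟨j, hj⟩ := hσ x hx
          refine ⟨Fin.natAdd r j, ?_⟩
          simp only [Fin.append_right]
          rw [hj, starMat_left M (2 * A₀) x y (fun h => hxy h.symm)]
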